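/- Let U ⊂ ℝ^N be a Lebesgue-measurable set of finite measure |U|, let u : U → ℝ be measurable, and let σ, r, Λ, S be positive real numbers with σ < r and (∫_U |u(x)|^r dx)^{1/r} ≤ S·Λ. Then ∫_U |u(x)|^σ · |log(|u(x)|/Λ)| dx ≤ ( |U|/(σ·e) + S^r/(e·(r−σ)) ) · Λ^σ, where the integrand is interpreted as 0 at points where u(x) = 0 and e = exp(1). -/

import Mathlib

open MeasureTheory

lemma aux_xexp (x : ℝ) : x * Real.exp (-x) ≤ Real.exp (-1) := by
  have h1 : x ≤ Real.exp (x - 1) := by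
    have := Real.add_one_le_exp (x - 1); linarith
  have h2 : Real.exp (x - 1) * Real.exp (-x) = Real.exp (-1) := by
    rw [← Real.exp_add]; ring_nf
  calc x * Real.exp (-x) ≤ Real.exp (x - 1) * Real.exp (-x) :=
        mul_le_mul_of_nonneg_right h1 (Real.exp_nonneg _)
    _ = Real.exp (-1) := h2

lemma aux_key (σ r : ℝ) (hσ : 0 < σ) (hσr : σ < r) (t : ℝ) (ht : 0 ≤ t) :
    t ^ σ * |Real.log t| ≤
      1 / (σ * Real.exp 1) + t ^ r / ((r - σ) * Real.exp 1) := by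
  have he : (0:ℝ) < Real.exp 1 := Real.exp_pos 1
  have hrs : (0:ℝ) < r - σ := by linarith
  have hr : (0:ℝ) < r := hσ.trans hσr
  have hexp1 : Real.exp (-1) = 1 / Real.exp 1 := by
    rw [Real.exp_neg]; simp [one_div]
  rcases eq_or_lt_of_le ht with h0 | h0
  · rw [← h0, Real.zero_rpow hσ.ne', Real.zero_rpow hr.ne']
    simp
    positivity
  rcases le_or_gt t 1 with h1 | h1
  · -- 0 < t ≤ 1
    have hlog : Real.log t ≤ 0 := Real.log_nonpos (le_of_lt h0) h1
    have habs : |Real.log t| = -Real.log t := abs_of_nonpos hlog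
    set x := σ * (-Real.log t) with hx
    have hmain : x * Real.exp (-x) ≤ Real.exp (-1) := aux_xexp x
    have htσ : t ^ σ = Real.exp (-x) := by
      rw [Real.rpow_def_of_pos h0, hx]; ring_nf
    have hLHS : t ^ σ * |Real.log t| = (x * Real.exp (-x)) / σ := by
      rw [habs, htσ, hx]; field_simp
    rw [hLHS]
    have h2 : (x * Real.exp (-x)) / σ ≤ Real.exp (-1) / σ := by gcongr
    have h3 : Real.exp (-1) / σ = 1 / (σ * Real.exp 1) := by
      rw [hexp1]; field_simp
    have h4 : (0:ℝ) ≤ t ^ r / ((r - σ) * Real.exp 1) := by positivity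
    linarith
  · -- t > 1
    have hlog : 0 < Real.log t := Real.log_pos h1
    have habs : |Real.log t| = Real.log t := abs_of_pos hlog
    set y := (r - σ) * Real.log t with hy
    have hexpy : Real.exp y = t ^ (r - σ) := by
      rw [Real.rpow_def_of_pos (by linarith : (0:ℝ) < t), hy, mul_comm]
    have hmain : y * Real.exp (-y) ≤ Real.exp (-1) := aux_xexp y
    have hey : 0 < Real.exp y := Real.exp_pos y
    have hmul1 : Real.exp (-y) * Real.exp y = 1 := by
      rw [← Real.exp_add]; simp
    have h5 : y ≤ Real.exp y * Real.exp (-1) := by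
      calc y = (y * Real.exp (-y)) * Real.exp y := by
            rw [mul_assoc, hmul1, mul_one]
        _ ≤ Real.exp (-1) * Real.exp y :=
            mul_le_mul_of_nonneg_right hmain hey.le
        _ = Real.exp y * Real.exp (-1) := by ring
    have hlt : Real.log t ≤ t ^ (r - σ) / ((r - σ) * Real.exp 1) := by
      rw [hexp1, hexpy] at h5
      rw [le_div_iff₀ (by positivity)]
      have hinv : (1 / Real.exp 1) * Real.exp 1 = 1 := by field_simp
      nlinarith [mul_le_mul_of_nonneg_right h5 he.le,
        Real.rpow_pos_of_pos (lt_trans one_pos h1) (r - σ)]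
    have htσpos : 0 < t ^ σ := Real.rpow_pos_of_pos (by linarith) σ
    have hmul : t ^ σ * t ^ (r - σ) = t ^ r := by
      rw [← Real.rpow_add (by linarith : (0:ℝ) < t)]; ring_nf
    have h7 : t ^ σ * Real.log t ≤ t ^ σ * (t ^ (r - σ) / ((r - σ) * Real.exp 1)) :=
      mul_le_mul_of_nonneg_left hlt htσpos.le
    have h8 : t ^ σ * (t ^ (r - σ) / ((r - σ) * Real.exp 1)) =
        t ^ r / ((r - σ) * Real.exp 1) := by
      rw [← hmul]; ring
    have h9 : (0:ℝ) ≤ 1 / (σ * Real.exp 1) := by positivity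
    rw [habs]
    linarith

theorem log_weighted_norm_estimate (N : ℕ) (U : Set (Fin N → ℝ))
    (hU : MeasurableSet U) (hUfin : volume U < ⊤)
    (u : (Fin N → ℝ) → ℝ) (hu : Measurable u)
    (σ r Λ S : ℝ) (hσ : 0 < σ) (hσr : σ < r) (hΛ : 0 < Λ) (hS : 0 < S)
    (hur : IntegrableOn (fun x => |u x| ^ r) U)
    (hnorm : (∫ x in U, |u x| ^ r) ^ (1 / r) ≤ S * Λ) :
    (∫ x in U, |u x| ^ σ * |Real.log (|u x| / Λ)|) ≤
      ((volume U).toReal / (σ * Real.exp 1) + S ^ r / (Real.exp 1 * (r - σ))) * Λ ^ σ := by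
  have he : (0:ℝ) < Real.exp 1 := Real.exp_pos 1
  have hrs : (0:ℝ) < r - σ := by linarith
  have hr : (0:ℝ) < r := hσ.trans hσr
  set I := ∫ x in U, |u x| ^ r with hI
  have hInn : 0 ≤ I := integral_nonneg fun x => Real.rpow_nonneg (abs_nonneg _) r
  have hIr : I ≤ S ^ r * Λ ^ r := by
    have h1 := Real.rpow_le_rpow (Real.rpow_nonneg hInn _) hnorm hr.le
    rw [← Real.rpow_mul hInn, one_div, inv_mul_cancel₀ hr.ne', Real.rpow_one] at h1
    rwa [Real.mul_rpow hS.le hΛ.le] at h1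
  set c : ℝ := Λ ^ σ / Λ ^ r / ((r - σ) * Real.exp 1) with hc
  have hcnn : 0 ≤ c := by positivity
  set g : (Fin N → ℝ) → ℝ := fun x => Λ ^ σ / (σ * Real.exp 1) + c * |u x| ^ r with hg
  have hgint : IntegrableOn g U := by
    apply Integrable.add
    · exact integrableOn_const hUfin.ne
    · exact hur.const_mul c
  have hpt : ∀ x, |u x| ^ σ * |Real.log (|u x| / Λ)| ≤ g x := by
    intro x
    set t : ℝ := |u x| / Λ with htdef
    have htnn : 0 ≤ t := by positivity
    have huxt : |u x| = Λ * t := by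
      rw [htdef]; field_simp
    have h1 : |u x| ^ σ = Λ ^ σ * t ^ σ := by
      rw [huxt, Real.mul_rpow hΛ.le htnn]
    have h2 : t ^ r = |u x| ^ r / Λ ^ r := by
      rw [htdef, Real.div_rpow (abs_nonneg _) hΛ.le]
    have hkey := aux_key σ r hσ hσr t htnn
    have h3 : |u x| ^ σ * |Real.log (|u x| / Λ)| = Λ ^ σ * (t ^ σ * |Real.log t|) := by
      rw [h1]; ring
    rw [h3, hg]
    have h4 : Λ ^ σ * (t ^ σ * |Real.log t|) ≤
        Λ ^ σ * (1 / (σ * Real.exp 1) + t ^ r / ((r - σ) * Real.exp 1)) :=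
      mul_le_mul_of_nonneg_left hkey (by positivity)
    have h5 : Λ ^ σ * (1 / (σ * Real.exp 1) + t ^ r / ((r - σ) * Real.exp 1)) =
        Λ ^ σ / (σ * Real.exp 1) + c * |u x| ^ r := by
      rw [h2, hc]; field_simp
    linarith
  have hmono : (∫ x in U, |u x| ^ σ * |Real.log (|u x| / Λ)|) ≤ ∫ x in U, g x := by
    apply integral_mono_of_nonneg
    · filter_upwards with x
      positivity
    · exact hgint
    · filter_upwards with x; exact hpt x
  have hgeq : (∫ x in U, g x) =
      (volume U).toReal * (Λ ^ σ / (σ * Real.exp 1)) + c * I := by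
    rw [hg]
    rw [integral_add (integrableOn_const (C := Λ ^ σ / (σ * Real.exp 1)) hUfin.ne) (hur.const_mul c)]
    rw [integral_const, integral_const_mul]
    simp [smul_eq_mul, hI, Measure.real]
  have hΛcancel : Λ ^ σ / Λ ^ r * Λ ^ r = Λ ^ σ :=
    div_mul_cancel₀ _ (by positivity : Λ ^ r ≠ 0)
  have hcI : c * I ≤ S ^ r / (Real.exp 1 * (r - σ)) * Λ ^ σ := by
    have h1 : c * I ≤ c * (S ^ r * Λ ^ r) := mul_le_mul_of_nonneg_left hIr hcnn
    have h2 : c * (S ^ r * Λ ^ r) = S ^ r / (Real.exp 1 * (r - σ)) * Λ ^ σ := by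
      rw [hc]
      field_simp
    linarith
  calc (∫ x in U, |u x| ^ σ * |Real.log (|u x| / Λ)|)
      ≤ (volume U).toReal * (Λ ^ σ / (σ * Real.exp 1)) + c * I := by
        rw [← hgeq]; exact hmono
    _ ≤ (volume U).toReal * (Λ ^ σ / (σ * Real.exp 1))
        + S ^ r / (Real.exp 1 * (r - σ)) * Λ ^ σ := by linarith
    _ = ((volume U).toReal / (σ * Real.exp 1) + S ^ r / (Real.exp 1 * (r - σ))) * Λ ^ σ := by
        ring
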